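/- Let φ(x) = Σ_{i≥2} (3i−3)!/(((i−1)!)²·i!)·x^i ∈ ℚ[[x]], let R ∈ (ℚ[u])[[z]] be the unique formal power series with zero constant term satisfying R = z + u·φ(R), and let H ∈ (ℚ[u])[[z]] be the unique series with H(0)=0 and u·∂H/∂z = 2(R−z) (the series R−z is divisible by u, so H is well defined over ℚ[u]). Then, writing H′ = ∂H/∂z and H″ = ∂²H/∂z², the following identity holds in (ℚ[u])[[z]]: 3(u+1)u²·H′²·H″ + 12u²z·H′·H″ + 6(u−8)u·H′² + 240·H + 4(6uz − 54z + 1)·H′ + 4(3uz² + 30uH + 27z² − z)·H″ + 24z² = 0. -/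

import Mathlib

/-- The coefficient `(3i−3)!/(((i−1)!)²·i!)` of `φ(x) = Σ_{i≥2} (3i−3)!/(((i−1)!)²·i!)·x^i`. -/
noncomputable def tetraCoef (i : ℕ) : ℚ :=
  (Nat.factorial (3 * i - 3) : ℚ) /
    ((Nat.factorial (i - 1) : ℚ) ^ 2 * (Nat.factorial i : ℚ))

namespace TetraAux

open PowerSeries Finset

noncomputable def aa (i : ℕ) : ℚ := if 2 ≤ i then tetraCoef i else 0
noncomputable def bb (i : ℕ) : ℚ := ((i : ℚ) + 1) * aa (i + 1)
noncomputable def ff (i : ℕ) : ℚ := aa (i - 1) / (i : ℚ)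

/-- `comp c R = Σ_i c_i R^i` (coefficientwise truncated sum). -/
noncomputable def comp (c : ℕ → ℚ) (R : PowerSeries (Polynomial ℚ)) :
    PowerSeries (Polynomial ℚ) :=
  PowerSeries.mk fun n => ∑ i ∈ Finset.range (n + 1),
    Polynomial.C (c i) * PowerSeries.coeff n (R ^ i)

variable {R : PowerSeries (Polynomial ℚ)}

lemma coeff_pow_eq_zero (hR0 : PowerSeries.constantCoeff R = 0)
    {n i : ℕ} (h : n < i) : PowerSeries.coeff n (R ^ i) = 0 := by
  have hdvd : (PowerSeries.X : PowerSeries (Polynomial ℚ)) ^ i ∣ R ^ i :=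
    pow_dvd_pow_of_dvd (PowerSeries.X_dvd_iff.mpr hR0) i
  exact PowerSeries.X_pow_dvd_iff.mp hdvd n h

lemma coeff_comp (hR0 : PowerSeries.constantCoeff R = 0)
    (c : ℕ → ℚ) {n N : ℕ} (hn : n ≤ N) :
    PowerSeries.coeff n (comp c R)
      = ∑ i ∈ Finset.range (N + 1),
          Polynomial.C (c i) * PowerSeries.coeff n (R ^ i) := by
  rw [comp, coeff_mk]
  refine Finset.sum_subset (by intro i hi; simp only [mem_range] at *; omega) ?_
  intro i hi hni
  simp only [mem_range] at hi hni
  rw [coeff_pow_eq_zero hR0 (by omega), mul_zero]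

lemma coeff_comp_mul (hR0 : PowerSeries.constantCoeff R = 0)
    (c : ℕ → ℚ) (W : PowerSeries (Polynomial ℚ)) (n : ℕ) :
    PowerSeries.coeff n (comp c R * W)
      = ∑ i ∈ Finset.range (n + 1),
          Polynomial.C (c i) * PowerSeries.coeff n (R ^ i * W) := by
  rw [PowerSeries.coeff_mul]
  have h1 : ∀ p ∈ Finset.HasAntidiagonal.antidiagonal n,
      PowerSeries.coeff p.1 (comp c R) * PowerSeries.coeff p.2 W
        = ∑ i ∈ Finset.range (n + 1), Polynomial.C (c i)
            * (PowerSeries.coeff p.1 (R ^ i)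
              * PowerSeries.coeff p.2 W) := by
    intro p hp
    have hple : p.1 ≤ n := by
      have := Finset.HasAntidiagonal.mem_antidiagonal.mp hp; omega
    rw [coeff_comp hR0 c hple, Finset.sum_mul]
    exact Finset.sum_congr rfl fun i _ => by ring
  rw [Finset.sum_congr rfl h1, Finset.sum_comm]
  refine Finset.sum_congr rfl fun i _ => ?_
  rw [← Finset.mul_sum, PowerSeries.coeff_mul]


lemma derivativeFun_pow (f : PowerSeries (Polynomial ℚ)) (k : ℕ) :
    PowerSeries.derivativeFun (f ^ (k + 1))
      = (k + 1) • (f ^ k * PowerSeries.derivativeFun f) := by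
  induction k with
  | zero => rw [zero_add, pow_one, pow_zero, one_mul, one_smul]
  | succ k ih =>
    rw [pow_succ, PowerSeries.derivativeFun_mul, ih, smul_eq_mul, smul_eq_mul,
      nsmul_eq_mul, nsmul_eq_mul]
    push_cast
    ring

lemma coeff_derivativeFun' (f : PowerSeries (Polynomial ℚ)) (n : ℕ) :
    PowerSeries.coeff n (PowerSeries.derivativeFun f)
      = PowerSeries.coeff (n + 1) f * ((n : Polynomial ℚ) + 1) :=
  PowerSeries.coeff_derivative f n

lemma derivative_comp (hR0 : PowerSeries.constantCoeff R = 0) (c : ℕ → ℚ) :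
    PowerSeries.derivativeFun (comp c R)
      = comp (fun i => ((i : ℚ) + 1) * c (i + 1)) R * PowerSeries.derivativeFun R := by
  refine PowerSeries.ext fun n => ?_
  rw [coeff_derivativeFun', coeff_comp_mul hR0,
    coeff_comp hR0 c (le_refl (n + 1)), Finset.sum_mul, Finset.sum_range_succ']
  have h0 : PowerSeries.coeff (n + 1) (R ^ 0) = 0 := by
    simp [PowerSeries.coeff_one]
  rw [h0, mul_zero, zero_mul, add_zero]
  refine Finset.sum_congr rfl ?_
  intro i _
  have hd := derivativeFun_pow R i
  have hco := congrArg (PowerSeries.coeff n) hd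
  rw [coeff_derivativeFun'] at hco
  have hco2 : PowerSeries.coeff (n + 1) (R ^ (i + 1)) * ((n : Polynomial ℚ) + 1)
      = ((i : Polynomial ℚ) + 1) * PowerSeries.coeff n
          (R ^ i * PowerSeries.derivativeFun R) := by
    rw [hco, map_nsmul, nsmul_eq_mul]
    push_cast
    ring
  have hcast : (Polynomial.C (((i : ℚ)) + 1) : Polynomial ℚ) = ((i : Polynomial ℚ) + 1) := by
    rw [map_add, map_one, Polynomial.C_eq_natCast]
  calc Polynomial.C (c (i + 1)) * PowerSeries.coeff (n + 1) (R ^ (i + 1))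
          * ((n : Polynomial ℚ) + 1)
      = Polynomial.C (c (i + 1)) * (PowerSeries.coeff (n + 1) (R ^ (i + 1))
          * ((n : Polynomial ℚ) + 1)) := by ring
    _ = Polynomial.C (c (i + 1)) * (((i : Polynomial ℚ) + 1)
          * PowerSeries.coeff n (R ^ i * PowerSeries.derivativeFun R)) := by
          rw [hco2]
    _ = Polynomial.C (((i : ℚ) + 1) * c (i + 1)) * PowerSeries.coeff n
          (R ^ i * PowerSeries.derivativeFun R) := by
          rw [Polynomial.C_mul, hcast]; ring

lemma comp_mul_R (hR0 : PowerSeries.constantCoeff R = 0) (c : ℕ → ℚ) :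
    comp c R * R = comp (fun i => if 1 ≤ i then c (i - 1) else 0) R := by
  refine PowerSeries.ext fun n => ?_
  rw [coeff_comp_mul hR0, comp, coeff_mk, Finset.sum_range_succ, Finset.sum_range_succ']
  have hlast : PowerSeries.coeff n (R ^ n * R) = 0 := by
    rw [← pow_succ, coeff_pow_eq_zero hR0 (Nat.lt_succ_self n)]
  rw [hlast, mul_zero, add_zero]
  simp only [if_neg (by omega : ¬ (1:ℕ) ≤ 0), Polynomial.C_0, zero_mul, add_zero]
  refine Finset.sum_congr rfl ?_
  intro i _
  rw [← pow_succ]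
  simp

lemma comp_add (c d : ℕ → ℚ) :
    comp (fun i => c i + d i) R = comp c R + comp d R := by
  refine PowerSeries.ext fun n => ?_
  simp [comp, coeff_mk, map_add, add_mul, Finset.sum_add_distrib]

lemma comp_Cmul (q : ℚ) (c : ℕ → ℚ) :
    comp (fun i => q * c i) R
      = PowerSeries.C (Polynomial.C q) * comp c R := by
  refine PowerSeries.ext fun n => ?_
  simp [comp, coeff_mk, PowerSeries.coeff_C_mul, Finset.mul_sum, map_mul, mul_assoc]

lemma comp_zero : comp (fun _ => (0:ℚ)) R = 0 := by
  ext n; simp [comp, coeff_mk]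

lemma comp_three : comp (fun i => if i = 0 then (3:ℚ) else 0) R = 3 := by
  refine PowerSeries.ext fun n => ?_
  have h3 : (3 : PowerSeries (Polynomial ℚ))
      = PowerSeries.C (3 : Polynomial ℚ) := (map_ofNat _ 3).symm
  rw [comp, coeff_mk, h3, PowerSeries.coeff_C]
  rcases Nat.eq_zero_or_pos n with h | h
  · subst h
    simp [Finset.sum_range_one]
    exact (map_ofNat Polynomial.C 3)
  · rw [if_neg (by omega : ¬ n = 0)]
    refine Finset.sum_eq_zero ?_
    intro i hi
    rcases Nat.eq_zero_or_pos i with hi0 | hi0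
    · subst hi0
      rw [pow_zero, PowerSeries.coeff_one, if_neg (by omega : ¬ n = 0), mul_zero]
    · rw [if_neg (by omega : ¬ i = 0), map_zero, zero_mul]


lemma tetra_rec (m : ℕ) :
    ((m : ℚ) + 3) * ((m : ℚ) + 2) ^ 2 * tetraCoef (m + 3)
      = (3 * (m : ℚ) + 6) * (3 * (m : ℚ) + 5) * (3 * (m : ℚ) + 4) * tetraCoef (m + 2) := by
  have e1 : 3 * (m + 3) - 3 = 3 * m + 6 := by omega
  have e2 : 3 * (m + 2) - 3 = 3 * m + 3 := by omega
  rw [tetraCoef, tetraCoef, e1, e2]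
  have e3 : m + 3 - 1 = m + 2 := rfl
  have e4 : m + 2 - 1 = m + 1 := rfl
  rw [e3, e4]
  have f1 : (Nat.factorial (3 * m + 6) : ℚ)
      = (3 * (m:ℚ) + 6) * (3 * (m:ℚ) + 5) * (3 * (m:ℚ) + 4) * Nat.factorial (3 * m + 3) := by
    rw [show 3 * m + 6 = (3 * m + 5) + 1 from rfl, Nat.factorial_succ,
        show 3 * m + 5 = (3 * m + 4) + 1 from rfl, Nat.factorial_succ,
        show 3 * m + 4 = (3 * m + 3) + 1 from rfl, Nat.factorial_succ]
    push_cast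
    ring
  have f2 : (Nat.factorial (m + 3) : ℚ) = ((m:ℚ) + 3) * Nat.factorial (m + 2) := by
    rw [show m + 3 = (m + 2) + 1 from rfl, Nat.factorial_succ]
    push_cast
    ring
  have f3 : (Nat.factorial (m + 2) : ℚ) = ((m:ℚ) + 2) * Nat.factorial (m + 1) := by
    rw [show m + 2 = (m + 1) + 1 from rfl, Nat.factorial_succ]
    push_cast
    ring
  rw [f1, f2, f3]
  have h1 : (Nat.factorial (m + 1) : ℚ) ≠ 0 := Nat.cast_ne_zero.mpr (Nat.factorial_ne_zero _)
  have h2 : (Nat.factorial (3 * m + 3) : ℚ) ≠ 0 := Nat.cast_ne_zero.mpr (Nat.factorial_ne_zero _)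
  have h3 : ((m:ℚ) + 2) ≠ 0 := by positivity
  have h4 : ((m:ℚ) + 3) ≠ 0 := by positivity
  field_simp

lemma aa_two : aa 2 = 3 := by
  norm_num [aa, tetraCoef, Nat.factorial]

/-- The pointwise hypergeometric identity behind everything. -/
lemma key_pointwise (i : ℕ) :
    (60 * ff i + aa i)
      + (if 1 ≤ i then (-1) * bb (i-1) + (-54) * aa (i-1) else 0)
      + (if 1 ≤ i then (if 1 ≤ i - 1 then 27 * bb (i-1-1)
            + (if i-1-1 = 0 then (3:ℚ) else 0) else 0) else 0) = 0 := by
  match i with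
  | 0 => norm_num [ff, aa]
  | 1 => norm_num [ff, aa, bb]
  | 2 =>
      have h2 : aa 1 = 0 := by norm_num [aa]
      norm_num [ff, bb, h2, aa_two]
  | (m+3) =>
      have t1 : (1:ℕ) ≤ m + 3 := by omega
      have t2 : (1:ℕ) ≤ m + 2 := by omega
      have t3 : ¬ (m + 1 = 0) := by omega
      simp only [if_pos t1, show m + 3 - 1 = m + 2 from rfl, if_pos t2,
        show m + 2 - 1 = m + 1 from rfl, if_neg t3, ff, bb,
        show m + 1 + 1 = m + 2 from rfl, show m + 2 + 1 = m + 3 from rfl]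
      rw [show aa (m+3) = tetraCoef (m+3) from if_pos (by omega),
          show aa (m+2) = tetraCoef (m+2) from if_pos (by omega)]
      have h4 : ((m:ℚ) + 3) ≠ 0 := by positivity
      have hrec := tetra_rec m
      have h2 : ((m:ℚ) + 2) ≠ 0 := by positivity
      push_cast
      field_simp
      refine mul_left_cancel₀ h2 ?_
      rw [mul_zero]
      linear_combination (-1 : ℚ) * hrec


lemma derivativeFun_sub (f g : PowerSeries (Polynomial ℚ)) :
    PowerSeries.derivativeFun (f - g)
      = PowerSeries.derivativeFun f - PowerSeries.derivativeFun g := by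
  have h := PowerSeries.derivativeFun_add (f - g) g
  rw [sub_add_cancel] at h
  exact eq_sub_of_add_eq h.symm

lemma constantCoeff_comp (c : ℕ → ℚ) :
    PowerSeries.constantCoeff (comp c R) = Polynomial.C (c 0) := by
  rw [comp, PowerSeries.constantCoeff_mk]
  simp [Finset.sum_range_one]

lemma hv_series (hR0 : PowerSeries.constantCoeff R = 0) :
    60 * comp ff R + comp aa R + (-1 * comp bb R + -54 * comp aa R) * R
      + (27 * comp bb R + 3) * (R * R) = 0 := by
  have e1 : 60 * comp ff R + comp aa R = comp (fun i => 60 * ff i + aa i) R := by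
    rw [comp_add (fun i => (60:ℚ) * ff i) aa, comp_Cmul]
    simp [map_ofNat]
  have e2 : -1 * comp bb R + -54 * comp aa R
      = comp (fun i => (-1:ℚ) * bb i + (-54:ℚ) * aa i) R := by
    rw [comp_add (fun i => (-1:ℚ) * bb i) (fun i => (-54:ℚ) * aa i), comp_Cmul, comp_Cmul]
    simp [map_ofNat, map_neg]
  have e3 : 27 * comp bb R + 3
      = comp (fun i => (27:ℚ) * bb i + (if i = 0 then (3:ℚ) else 0)) R := by
    rw [comp_add (fun i => (27:ℚ) * bb i) (fun i => if i = 0 then (3:ℚ) else 0),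
      comp_Cmul, comp_three]
    simp [map_ofNat]
  rw [e1, e2, e3, ← mul_assoc]
  rw [comp_mul_R hR0, comp_mul_R hR0, comp_mul_R hR0]
  rw [← comp_add, ← comp_add]
  have hzero : (fun i => ((fun i => (60:ℚ) * ff i + aa i) i
        + (fun i => if 1 ≤ i then (-1:ℚ) * bb (i-1) + (-54:ℚ) * aa (i-1) else 0) i)
      + (fun i => if 1 ≤ i then (if 1 ≤ i - 1 then (27:ℚ) * bb (i-1-1)
          + (if i-1-1 = 0 then (3:ℚ) else 0) else 0) else 0) i) = fun _ => (0:ℚ) := by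
    funext i
    simpa using key_pointwise i
  rw [hzero, comp_zero]

end TetraAux

open TetraAux

/-- Let `φ(x) = Σ_{i≥2} (3i−3)!/(((i−1)!)²·i!)·x^i`, let `R ∈ (ℚ[u])[[z]]` be the unique
series with zero constant term satisfying `R = z + u·φ(R)` (stated coefficientwise; the
truncation at `i ≤ n` is exact since `R` has order `≥ 1`), and let `H` be the unique series
with `H(0) = 0` and `u·H′ = 2(R−z)`.  Then `H` satisfies the stated second-order differential
equation of degree 3. -/
theorem stmt_10 (R H : PowerSeries (Polynomial ℚ))
    (hR0 : PowerSeries.constantCoeff R = 0)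
    (hR : ∀ n : ℕ, PowerSeries.coeff n R
        = PowerSeries.coeff n PowerSeries.X
          + Polynomial.X * ∑ i ∈ Finset.Icc 2 n,
              Polynomial.C (tetraCoef i) * PowerSeries.coeff n (R ^ i))
    (hH0 : PowerSeries.constantCoeff H = 0)
    (hH : PowerSeries.C Polynomial.X * PowerSeries.derivativeFun H
        = 2 * (R - PowerSeries.X)) :
    3 * ((PowerSeries.C Polynomial.X) + 1) *
          (PowerSeries.C Polynomial.X) ^ 2 *
          (PowerSeries.derivativeFun H) ^ 2 *
          (PowerSeries.derivativeFun (PowerSeries.derivativeFun H))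
      + 12 * (PowerSeries.C Polynomial.X) ^ 2 * PowerSeries.X *
          (PowerSeries.derivativeFun H) *
          (PowerSeries.derivativeFun (PowerSeries.derivativeFun H))
      + 6 * ((PowerSeries.C Polynomial.X) - 8) *
          (PowerSeries.C Polynomial.X) * (PowerSeries.derivativeFun H) ^ 2
      + 240 * H
      + 4 * (6 * (PowerSeries.C Polynomial.X) * PowerSeries.X
              - 54 * PowerSeries.X + 1) * (PowerSeries.derivativeFun H)
      + 4 * (3 * (PowerSeries.C Polynomial.X) * PowerSeries.X ^ 2
              + 30 * (PowerSeries.C Polynomial.X) * H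
              + 27 * PowerSeries.X ^ 2 - PowerSeries.X) *
          (PowerSeries.derivativeFun (PowerSeries.derivativeFun H))
      + 24 * PowerSeries.X ^ 2
      = 0 := by
  set U : PowerSeries (Polynomial ℚ) := PowerSeries.C Polynomial.X with hUdef
  set A : PowerSeries (Polynomial ℚ) := comp aa R with hAdef
  set B : PowerSeries (Polynomial ℚ) := comp bb R with hBdef
  set F : PowerSeries (Polynomial ℚ) := comp ff R with hFdef
  -- R = X + U * A
  have hRA : R = PowerSeries.X + U * A := by
    refine PowerSeries.ext fun n => ?_
    rw [hR n, map_add, hUdef, PowerSeries.coeff_C_mul]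
    congr 1
    rw [hAdef, comp, PowerSeries.coeff_mk]
    have hstep : ∑ i ∈ Finset.Icc 2 n,
          Polynomial.C (tetraCoef i) * PowerSeries.coeff n (R ^ i)
        = ∑ i ∈ Finset.Icc 2 n,
          Polynomial.C (aa i) * PowerSeries.coeff n (R ^ i) := by
      refine Finset.sum_congr rfl ?_
      intro i hi
      rw [show aa i = tetraCoef i from if_pos (Finset.mem_Icc.mp hi).1]
    rw [hstep]
    congr 1
    have hsub : Finset.Icc 2 n ⊆ Finset.range (n + 1) := by
      intro j hj
      have := Finset.mem_Icc.mp hj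
      exact Finset.mem_range.mpr (by omega)
    refine Finset.sum_subset hsub ?_
    intro i hi hni
    have hin : i < n + 1 := Finset.mem_range.mp hi
    simp only [Finset.mem_Icc, not_and, not_le] at hni
    have h2 : i < 2 := by
      by_contra hcon
      have := hni (by omega)
      omega
    rw [show aa i = 0 from if_neg (by omega), map_zero, zero_mul]
  have hU0 : U ≠ 0 := by
    intro h
    have h2 := congrArg (PowerSeries.constantCoeff) h
    rw [hUdef, PowerSeries.constantCoeff_C, map_zero] at h2
    exact Polynomial.X_ne_zero h2
  -- H' = 2A
  have hH' : PowerSeries.derivativeFun H = 2 * A := by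
    refine mul_left_cancel₀ hU0 ?_
    rw [hH, hRA]
    ring
  -- derivatives of comp series
  have hdX : PowerSeries.derivativeFun (PowerSeries.X : PowerSeries (Polynomial ℚ)) = 1 :=
    PowerSeries.derivative_X
  have hU' : PowerSeries.derivativeFun U = 0 := by
    rw [hUdef]; exact PowerSeries.derivative_C
  have hbb : (fun (i : ℕ) => ((i:ℚ) + 1) * aa (i + 1)) = bb := by
    funext i; rfl
  have hA' : PowerSeries.derivativeFun A = B * PowerSeries.derivativeFun R := by
    rw [hAdef, derivative_comp hR0 aa, hbb, hBdef]
  have hffaa : (fun (i : ℕ) => ((i:ℚ) + 1) * ff (i + 1)) = aa := by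
    funext i
    rw [ff, Nat.add_sub_cancel]
    have h : ((i:ℚ) + 1) ≠ 0 := by positivity
    push_cast
    field_simp
  have hF' : PowerSeries.derivativeFun F = A * PowerSeries.derivativeFun R := by
    rw [hFdef, derivative_comp hR0 ff, hffaa, hAdef]
  -- R' (1 - U B) = 1
  have hR' : PowerSeries.derivativeFun R = 1 + U * (B * PowerSeries.derivativeFun R) := by
    have h := congrArg PowerSeries.derivativeFun hRA
    rw [PowerSeries.derivativeFun_add, hdX, PowerSeries.derivativeFun_mul, hU', hA'] at h
    simpa only [smul_eq_mul, smul_zero, add_zero, mul_zero] using h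
  have hRd : PowerSeries.derivativeFun R * (1 - U * B) = 1 := by
    linear_combination hR'
  -- H'' = 2 B R'
  have hH'' : PowerSeries.derivativeFun (PowerSeries.derivativeFun H)
      = 2 * (B * PowerSeries.derivativeFun R) := by
    rw [hH', two_mul, PowerSeries.derivativeFun_add, hA', two_mul]
  -- H = 2F - U A²
  have hHF : H = 2 * F - U * (A * A) := by
    refine PowerSeries.derivative.ext ?_ ?_
    · show PowerSeries.derivativeFun H
        = PowerSeries.derivativeFun (2 * F - U * (A * A))
      rw [hH', derivativeFun_sub, two_mul F, PowerSeries.derivativeFun_add, hF',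
        PowerSeries.derivativeFun_mul, hU', PowerSeries.derivativeFun_mul, hA']
      simp only [smul_eq_mul, smul_zero, add_zero, mul_zero]
      linear_combination (-(2 * A)) * hRd
    · rw [hH0, hFdef, hAdef, hUdef]
      simp [map_sub, map_mul, constantCoeff_comp, ff, aa]
  -- (1 - U B) ≠ 0
  have hDne : (1 : PowerSeries (Polynomial ℚ)) - U * B ≠ 0 := by
    intro h
    have h2 := congrArg (PowerSeries.constantCoeff) h
    rw [map_sub, map_one, map_mul, hBdef, constantCoeff_comp,
      show bb 0 = 0 by norm_num [bb, aa], map_zero, mul_zero, sub_zero, map_zero] at h2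
    exact one_ne_zero h2
  have hv := hv_series (R := R) hR0
  rw [← hAdef, ← hBdef, ← hFdef] at hv
  have hXR : (PowerSeries.X : PowerSeries (Polynomial ℚ)) = R - U * A := by
    rw [hRA]; ring
  refine (mul_eq_zero.mp ?_).resolve_right hDne
  rw [hH'', hH', hHF, hXR]
  linear_combination (2 * B * (3 * (U + 1) * U ^ 2 * (2 * A) ^ 2
      + 12 * U ^ 2 * (R - U * A) * (2 * A)
      + 4 * (3 * U * (R - U * A) ^ 2 + 30 * U * (2 * F - U * (A * A))
          + 27 * (R - U * A) ^ 2 - (R - U * A)))) * hRd + 8 * hv
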